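/- arXiv:2108.00083 — 4 statements merged into one kernel-verified Lean document; each statement's English description precedes it below -/
import Mathlib

section
/- Let M ∈ ℝ^{n×n} be a symmetric positive semidefinite matrix and let ρ : ℝ → ℝ be a loss kernel (differentiable on [0,∞), concave on [0,∞), with 0 ≤ ρ'(s) ≤ 1 for all s ≥ 0). Then for all matrices X, X⁰ ∈ ℝ^{d×n}, setting ω := ρ'(‖X⁰‖²_M), one has (1/2)·ω·‖X − X⁰‖²_M + ω·⟨X⁰M, X − X⁰⟩ + (1/2)·ρ(‖X⁰‖²_M) ≥ (1/2)·ρ(‖X‖²_M), and equality holds when X = X⁰. (Here ω·⟨X⁰M, X − X⁰⟩ is exactly ⟨∇F(X⁰), X − X⁰⟩ for F(X) := (1/2)ρ(‖X‖²_M).) -/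
open Matrix

lemma psd_trace_nonneg {n : ℕ} {A : Matrix (Fin n) (Fin n) ℝ} (hA : A.PosSemidef) :
    0 ≤ A.trace := by
  have h : ∀ i, 0 ≤ A i i := fun i => by simpa using hA.2 (Finsupp.single i 1)
  exact Finset.sum_nonneg fun i _ => h i

lemma tangent_le {ρ ρ' : ℝ → ℝ}
    (hdiff : ∀ s ∈ Set.Ici (0:ℝ), HasDerivWithinAt ρ (ρ' s) (Set.Ici 0) s)
    (hconc : ConcaveOn ℝ (Set.Ici 0) ρ) {s t : ℝ} (hs : 0 ≤ s) (ht : 0 ≤ t) :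
    ρ t ≤ ρ s + ρ' s * (t - s) := by
  rcases lt_trichotomy s t with h | h | h
  · have hsl := hconc.slope_le_of_hasDerivWithinAt hs ht h (hdiff s hs)
    rw [slope_def_field] at hsl
    have hpos : 0 < t - s := sub_pos.mpr h
    rw [div_le_iff₀ hpos] at hsl
    linarith
  · subst h; simp
  · have hsl := hconc.le_slope_of_hasDerivWithinAt ht hs h (hdiff s hs)
    rw [slope_def_field] at hsl
    have hpos : 0 < s - t := sub_pos.mpr h
    rw [le_div_iff₀ hpos] at hsl
    nlinarith

/-- Majorization of a robust loss term at an iterate `X₀`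
(Proposition 1 of the paper). Here `‖Y‖²_M = trace (Y * M * Yᵀ)` and
`⟨A, B⟩ = trace (A * Bᵀ)`. -/
theorem loss_majorization {d n : ℕ}
    (M : Matrix (Fin n) (Fin n) ℝ) (hM : M.PosSemidef)
    (ρ ρ' : ℝ → ℝ)
    (hdiff : ∀ s ∈ Set.Ici (0:ℝ), HasDerivWithinAt ρ (ρ' s) (Set.Ici 0) s)
    (hconc : ConcaveOn ℝ (Set.Ici 0) ρ)
    (hρ' : ∀ s : ℝ, 0 ≤ s → 0 ≤ ρ' s ∧ ρ' s ≤ 1)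
    (X X₀ : Matrix (Fin d) (Fin n) ℝ) :
    (1/2) * ρ' ((X₀ * M * X₀ᵀ).trace) * (((X - X₀) * M * (X - X₀)ᵀ).trace)
      + ρ' ((X₀ * M * X₀ᵀ).trace) * (((X₀ * M) * (X - X₀)ᵀ).trace)
      + (1/2) * ρ ((X₀ * M * X₀ᵀ).trace)
      ≥ (1/2) * ρ ((X * M * Xᵀ).trace)
    ∧ (X = X₀ →
      (1/2) * ρ' ((X₀ * M * X₀ᵀ).trace) * (((X - X₀) * M * (X - X₀)ᵀ).trace)
      + ρ' ((X₀ * M * X₀ᵀ).trace) * (((X₀ * M) * (X - X₀)ᵀ).trace)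
      + (1/2) * ρ ((X₀ * M * X₀ᵀ).trace)
      = (1/2) * ρ ((X * M * Xᵀ).trace)) := by
  have hsym : Mᵀ = M := by simpa using hM.1.eq
  have hpsd : ∀ A : Matrix (Fin d) (Fin n) ℝ, 0 ≤ (A * M * Aᵀ).trace := by
    intro A
    have h := hM.mul_mul_conjTranspose_same A
    simp only [conjTranspose_eq_transpose_of_trivial] at h
    exact psd_trace_nonneg h
  have hs : 0 ≤ (X₀ * M * X₀ᵀ).trace := hpsd X₀
  have ht : 0 ≤ (X * M * Xᵀ).trace := hpsd X
  have cross : (X * M * X₀ᵀ).trace = (X₀ * M * Xᵀ).trace := by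
    rw [← Matrix.trace_transpose (X * M * X₀ᵀ)]
    simp [Matrix.transpose_mul, Matrix.mul_assoc, hsym]
  have expand : ((X - X₀) * M * (X - X₀)ᵀ).trace
      = (X * M * Xᵀ).trace - (X * M * X₀ᵀ).trace - (X₀ * M * Xᵀ).trace
        + (X₀ * M * X₀ᵀ).trace := by
    simp [Matrix.sub_mul, Matrix.mul_sub, Matrix.transpose_sub]
    ring
  have expand2 : ((X₀ * M) * (X - X₀)ᵀ).trace
      = (X₀ * M * Xᵀ).trace - (X₀ * M * X₀ᵀ).trace := by
    simp [Matrix.mul_sub, Matrix.transpose_sub, Matrix.mul_assoc]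
  have key : (X * M * Xᵀ).trace
      = (X₀ * M * X₀ᵀ).trace + 2 * ((X₀ * M) * (X - X₀)ᵀ).trace
        + ((X - X₀) * M * (X - X₀)ᵀ).trace := by
    rw [expand, expand2, cross]; ring
  have htan := tangent_le hdiff hconc hs ht
  constructor
  · rw [key] at htan ⊢
    linarith
  · intro h
    subst h
    simp
end

section
/- Let M, Ω ∈ ℝ^{n×n} be symmetric positive semidefinite matrices such that Ω − M is positive semidefinite, and let ρ : ℝ → ℝ be a loss kernel (differentiable on [0,∞), concave on [0,∞), with 0 ≤ ρ'(s) ≤ 1 for all s ≥ 0). Then for all matrices X, X⁰ ∈ ℝ^{d×n}, setting ω := ρ'(‖X⁰‖²_M), one has (1/2)·ω·‖X − X⁰‖²_Ω + ω·⟨X⁰M, X − X⁰⟩ + (1/2)·ρ(‖X⁰‖²_M) ≥ (1/2)·ρ(‖X‖²_M), and equality holds when X = X⁰. -/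
open Matrix

lemma trace_quad_nonneg {d n : ℕ} {P : Matrix (Fin n) (Fin n) ℝ} (hP : P.PosSemidef)
    (Y : Matrix (Fin d) (Fin n) ℝ) : 0 ≤ (Y * P * Yᵀ).trace := by
  rw [Matrix.trace]
  apply Finset.sum_nonneg
  intro i _
  have := hP.dotProduct_mulVec_nonneg (fun j => Y i j)
  simp only [star_trivial, dotProduct, Matrix.mulVec, Matrix.diag, Matrix.mul_apply,
    Matrix.transpose_apply] at this ⊢
  calc (0:ℝ) ≤ ∑ j, Y i j * ∑ k, P j k * Y i k := this
    _ = ∑ k, (∑ j, Y i j * P j k) * Y i k := by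
        simp_rw [Finset.mul_sum, Finset.sum_mul]
        rw [Finset.sum_comm]
        ring_nf

lemma tangent_concave {ρ ρ' : ℝ → ℝ}
    (hdiff : ∀ s ∈ Set.Ici (0:ℝ), HasDerivWithinAt ρ (ρ' s) (Set.Ici 0) s)
    (hconc : ConcaveOn ℝ (Set.Ici 0) ρ)
    {t t₀ : ℝ} (ht : 0 ≤ t) (ht₀ : 0 ≤ t₀) :
    ρ t ≤ ρ t₀ + ρ' t₀ * (t - t₀) := by
  rcases lt_trichotomy t t₀ with h | h | h
  · have hs := hconc.le_slope_of_hasDerivWithinAt ht ht₀ h (hdiff t₀ ht₀)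
    rw [slope_def_field] at hs
    have ht' : t₀ - t > 0 := by linarith
    have := (le_div_iff₀ ht').mp hs
    nlinarith [this]
  · simp [h]
  · have hs := hconc.slope_le_of_hasDerivWithinAt ht₀ ht h (hdiff t₀ ht₀)
    rw [slope_def_field] at hs
    have ht' : t - t₀ > 0 := by linarith
    rw [div_le_iff₀ ht'] at hs
    nlinarith [hs]

/-- Majorization of a robust loss term with a dominating weight
matrix `Ω ⪰ M` (Proposition 2 of the paper). Here `‖Y‖²_M = trace (Y * M * Yᵀ)`
and `⟨A, B⟩ = trace (A * Bᵀ)`. -/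
theorem loss_majorization_dominating {d n : ℕ}
    (M Ω : Matrix (Fin n) (Fin n) ℝ)
    (hM : M.PosSemidef) (hΩ : Ω.PosSemidef) (hΩM : (Ω - M).PosSemidef)
    (ρ ρ' : ℝ → ℝ)
    (hdiff : ∀ s ∈ Set.Ici (0:ℝ), HasDerivWithinAt ρ (ρ' s) (Set.Ici 0) s)
    (hconc : ConcaveOn ℝ (Set.Ici 0) ρ)
    (hρ' : ∀ s : ℝ, 0 ≤ s → 0 ≤ ρ' s ∧ ρ' s ≤ 1)
    (X X₀ : Matrix (Fin d) (Fin n) ℝ) :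
    (1/2) * ρ' ((X₀ * M * X₀ᵀ).trace) * (((X - X₀) * Ω * (X - X₀)ᵀ).trace)
      + ρ' ((X₀ * M * X₀ᵀ).trace) * (((X₀ * M) * (X - X₀)ᵀ).trace)
      + (1/2) * ρ ((X₀ * M * X₀ᵀ).trace)
      ≥ (1/2) * ρ ((X * M * Xᵀ).trace)
    ∧ (X = X₀ →
      (1/2) * ρ' ((X₀ * M * X₀ᵀ).trace) * (((X - X₀) * Ω * (X - X₀)ᵀ).trace)
      + ρ' ((X₀ * M * X₀ᵀ).trace) * (((X₀ * M) * (X - X₀)ᵀ).trace)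
      + (1/2) * ρ ((X₀ * M * X₀ᵀ).trace)
      = (1/2) * ρ ((X * M * Xᵀ).trace)) := by
  set Δ := X - X₀ with hΔ
  set t₀ := (X₀ * M * X₀ᵀ).trace with ht₀def
  set t := (X * M * Xᵀ).trace with htdef
  have ht₀ : 0 ≤ t₀ := trace_quad_nonneg hM X₀
  have ht : 0 ≤ t := trace_quad_nonneg hM X
  have hω := hρ' t₀ ht₀
  -- key trace identity: t - t₀ = tr(ΔMΔᵀ) + 2 tr(X₀MΔᵀ)
  have hkey : t = (Δ * M * Δᵀ).trace + 2 * ((X₀ * M) * Δᵀ).trace + t₀ := by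
    have hX : X = Δ + X₀ := by rw [hΔ]; abel
    have hMsym : Mᵀ = M := by simpa using hM.1.eq
    have hswap : (Δ * M * X₀ᵀ).trace = ((X₀ * M) * Δᵀ).trace := by
      rw [← Matrix.trace_transpose (Δ * M * X₀ᵀ)]
      simp [Matrix.transpose_mul, hMsym, Matrix.mul_assoc]
    rw [htdef, ht₀def, hX]
    simp only [Matrix.add_mul, Matrix.mul_add, Matrix.transpose_add, Matrix.trace_add]
    rw [show ((X₀ * M) * Δᵀ).trace = (X₀ * M * Δᵀ).trace from rfl] at hswap ⊢
    linarith [hswap]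
  have htang : ρ t ≤ ρ t₀ + ρ' t₀ * (t - t₀) := tangent_concave hdiff hconc ht ht₀
  have hdom : 0 ≤ (Δ * (Ω - M) * Δᵀ).trace := trace_quad_nonneg hΩM Δ
  have hexp : (Δ * (Ω - M) * Δᵀ).trace = (Δ * Ω * Δᵀ).trace - (Δ * M * Δᵀ).trace := by
    simp [Matrix.mul_sub, Matrix.sub_mul, Matrix.trace_sub]
  constructor
  · have h1 : ρ' t₀ * (t - t₀) ≤ ρ' t₀ * ((Δ * Ω * Δᵀ).trace + 2 * ((X₀ * M) * Δᵀ).trace) := by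
      apply mul_le_mul_of_nonneg_left _ hω.1
      rw [hkey]; linarith [hexp ▸ hdom]
    nlinarith [htang, h1]
  · intro hX
    have : Δ = 0 := by rw [hΔ, hX]; simp
    rw [hkey]
    simp [this]
end

section
/- Let a > 0, let E = EuclideanSpace ℝ (Fin n) (n ≥ 1), and define φ : E → ℝ by φ(x) = ‖x‖² if ‖x‖² ≤ a and φ(x) = 2·√a·‖x‖ − a if ‖x‖² ≥ a. Then φ is differentiable on E, its gradient is given by ∇φ(x) = 2·x if ‖x‖ ≤ √a and ∇φ(x) = (2·√a/‖x‖)·x if ‖x‖ ≥ √a, and the gradient map x ↦ ∇φ(x) is Lipschitz continuous with constant 2: ‖∇φ(x) − ∇φ(y)‖ ≤ 2·‖x − y‖ for all x, y ∈ E. -/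
set_option maxHeartbeats 1000000

open Real InnerProductSpace RealInnerProductSpace

variable {E : Type*} [NormedAddCommGroup E] [InnerProductSpace ℝ E] [CompleteSpace E]

lemma myHasGradientAt_norm_sq (x : E) :
    HasGradientAt (fun y : E => ‖y‖ ^ 2) ((2 : ℝ) • x) x := by
  rw [hasGradientAt_iff_hasFDerivAt]
  refine (hasStrictFDerivAt_norm_sq x).hasFDerivAt.congr_fderiv ?_
  ext y
  simp [real_inner_smul_left, two_smul]

lemma myHasGradientAt_norm (x : E) (hx : x ≠ 0) :
    HasGradientAt (fun y : E => ‖y‖) (‖x‖⁻¹ • x) x := by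
  have hx0 : (0 : ℝ) < ‖x‖ := norm_pos_iff.mpr hx
  have h1 : HasFDerivAt (fun y : E => ‖y‖ ^ 2) (2 • (innerSL ℝ x)) x :=
    (hasStrictFDerivAt_norm_sq x).hasFDerivAt
  have h2 : HasDerivAt (√·) (1 / (2 * Real.sqrt (‖x‖ ^ 2))) (‖x‖ ^ 2) :=
    Real.hasDerivAt_sqrt (by positivity)
  have h3 := h2.comp_hasFDerivAt x h1
  simp only [Function.comp_def] at h3
  have heq : (fun y : E => Real.sqrt (‖y‖ ^ 2)) = fun y : E => ‖y‖ :=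
    funext fun y => Real.sqrt_sq (norm_nonneg y)
  rw [heq] at h3
  rw [hasGradientAt_iff_hasFDerivAt]
  refine h3.congr_fderiv ?_
  ext y
  rw [Real.sqrt_sq (norm_nonneg x)]
  simp [real_inner_smul_left, two_smul]
  field_simp
  ring

lemma huber_key {n : ℕ} (a : ℝ) (ha : 0 < a)
    (φ : EuclideanSpace ℝ (Fin n) → ℝ)
    (hφ : ∀ x, φ x = if ‖x‖^2 ≤ a then ‖x‖^2 else 2 * Real.sqrt a * ‖x‖ - a)
    (x : EuclideanSpace ℝ (Fin n)) :
    HasGradientAt φ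
      (if ‖x‖ ≤ Real.sqrt a then (2:ℝ) • x else (2 * Real.sqrt a / ‖x‖) • x) x := by
  have hsa : (0:ℝ) < Real.sqrt a := Real.sqrt_pos.mpr ha
  have hsa2 : Real.sqrt a ^ 2 = a := Real.sq_sqrt ha.le
  rcases lt_trichotomy ‖x‖ (Real.sqrt a) with h | h | h
  · rw [if_pos h.le]
    refine (myHasGradientAt_norm_sq x).congr_of_eventuallyEq ?_
    have hop : IsOpen {y : EuclideanSpace ℝ (Fin n) | ‖y‖ < Real.sqrt a} :=
      isOpen_lt continuous_norm continuous_const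
    have hmem : ∀ᶠ y in nhds x, ‖y‖ < Real.sqrt a := hop.mem_nhds h
    filter_upwards [hmem] with y hy
    rw [hφ y, if_pos (by nlinarith [norm_nonneg y])]
  · -- boundary case
    rw [if_pos h.le]
    rw [hasGradientAt_iff_isLittleO]
    have hx2 : ‖x‖ ^ 2 = a := by rw [h]; exact hsa2
    have hφx : φ x = a := by rw [hφ, if_pos (le_of_eq hx2), hx2]
    have bound : ∀ y, |φ y - φ x - ⟪(2:ℝ) • x, y - x⟫_ℝ| ≤ ‖y - x‖ ^ 2 := by
      intro y
      have hinner : ⟪(2:ℝ) • x, y - x⟫_ℝ = 2 * ⟪x, y⟫_ℝ - 2 * a := by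
        rw [real_inner_smul_left, inner_sub_right, real_inner_self_eq_norm_sq, hx2]
        ring
      have hns : ‖y - x‖ ^ 2 = ‖y‖ ^ 2 - 2 * ⟪x, y⟫_ℝ + a := by
        rw [norm_sub_sq_real, real_inner_comm, hx2]
      have ht : ⟪x, y⟫_ℝ ≤ Real.sqrt a * ‖y‖ := by
        have := real_inner_le_norm x y; rwa [h] at this
      by_cases hy : ‖y‖ ^ 2 ≤ a
      · have : φ y - φ x - ⟪(2:ℝ) • x, y - x⟫_ℝ = ‖y - x‖ ^ 2 := by
          rw [hφ y, if_pos hy, hφx, hinner, hns]; ring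
        rw [this, abs_of_nonneg (by positivity)]
      · rw [hφ y, if_neg hy, hφx, hinner]
        rw [abs_le]
        constructor
        · nlinarith [sq_nonneg (‖y - x‖), norm_nonneg y]
        · nlinarith [hns, sq_nonneg (‖y‖ - Real.sqrt a)]
    rw [Asymptotics.isLittleO_iff]
    intro c hc
    filter_upwards [Metric.ball_mem_nhds x hc] with y hy
    rw [Metric.mem_ball, dist_eq_norm] at hy
    calc ‖φ y - φ x - ⟪(2:ℝ) • x, y - x⟫_ℝ‖ ≤ ‖y - x‖ ^ 2 := by
          rw [Real.norm_eq_abs]; exact bound y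
      _ = ‖y - x‖ * ‖y - x‖ := sq (‖y - x‖) ▸ by ring
      _ ≤ c * ‖y - x‖ := mul_le_mul_of_nonneg_right hy.le (norm_nonneg _)
  · rw [if_neg (not_le.mpr h)]
    have hx0 : x ≠ 0 := by
      intro h0; rw [h0, norm_zero] at h; linarith
    have h1 : HasFDerivAt (fun y : EuclideanSpace ℝ (Fin n) => ‖y‖)
        (InnerProductSpace.toDual ℝ _ (‖x‖⁻¹ • x)) x :=
      (myHasGradientAt_norm x hx0).hasFDerivAt
    have h2 := (h1.const_mul (2 * Real.sqrt a)).sub_const a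
    have h3 : HasGradientAt (fun y : EuclideanSpace ℝ (Fin n) => 2 * Real.sqrt a * ‖y‖ - a)
        ((2 * Real.sqrt a / ‖x‖) • x) x := by
      rw [hasGradientAt_iff_hasFDerivAt]
      rw [show (2 * Real.sqrt a / ‖x‖) • x = (2 * Real.sqrt a) • (‖x‖⁻¹ • x) by
        rw [smul_smul, div_eq_mul_inv]]
      rw [map_smul]
      exact h2
    refine h3.congr_of_eventuallyEq ?_
    have hop : IsOpen {y : EuclideanSpace ℝ (Fin n) | Real.sqrt a < ‖y‖} :=
      isOpen_lt continuous_const continuous_norm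
    have hmem : ∀ᶠ y in nhds x, Real.sqrt a < ‖y‖ := hop.mem_nhds h
    filter_upwards [hmem] with y hy
    rw [hφ y, if_neg (not_le.mpr (by nlinarith))]


lemma huber_lip {n : ℕ} (a : ℝ) (ha : 0 < a) (x y : EuclideanSpace ℝ (Fin n)) :
    ‖(if ‖x‖ ≤ Real.sqrt a then (2:ℝ) • x else (2 * Real.sqrt a / ‖x‖) • x)
      - (if ‖y‖ ≤ Real.sqrt a then (2:ℝ) • y else (2 * Real.sqrt a / ‖y‖) • y)‖
      ≤ 2 * ‖x - y‖ := by
  have hsa : (0:ℝ) < Real.sqrt a := Real.sqrt_pos.mpr ha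
  have hsa2 : Real.sqrt a ^ 2 = a := Real.sq_sqrt ha.le
  set sa := Real.sqrt a with hsadef
  have ht : ⟪x, y⟫_ℝ ≤ ‖x‖ * ‖y‖ := real_inner_le_norm x y
  have hxy : ‖x - y‖ ^ 2 = ‖x‖ ^ 2 - 2 * ⟪x, y⟫_ℝ + ‖y‖ ^ 2 := norm_sub_sq_real x y
  have expand : ∀ (c d : ℝ), ‖c • x - d • y‖ ^ 2
      = c^2 * ‖x‖^2 - 2 * (c * d) * ⟪x, y⟫_ℝ + d^2 * ‖y‖^2 := by
    intro c d
    rw [norm_sub_sq_real, real_inner_smul_left, real_inner_smul_right, norm_smul, norm_smul]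
    simp only [Real.norm_eq_abs, mul_pow, sq_abs]
    ring
  have conclude : ∀ u v : EuclideanSpace ℝ (Fin n),
      ‖u - v‖ ^ 2 ≤ (2 * ‖x - y‖) ^ 2 → ‖u - v‖ ≤ 2 * ‖x - y‖ := by
    intro u v hle
    have := Real.sqrt_le_sqrt hle
    rwa [Real.sqrt_sq (norm_nonneg _), Real.sqrt_sq (by positivity)] at this
  split_ifs with hx hy hy
  · rw [← smul_sub, norm_smul]
    simp
  · -- x small, y large
    have hs : sa < ‖y‖ := not_le.mp hy
    have hs0 : (0:ℝ) < ‖y‖ := lt_trans hsa hs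
    apply conclude
    rw [expand 2 (2 * sa / ‖y‖)]
    set d := 2 * sa / ‖y‖ with hddef
    have hd : d * ‖y‖ = 2 * sa := div_mul_cancel₀ _ hs0.ne'
    have hd0 : 0 ≤ d := by positivity
    have hdle : d ≤ 2 := by rw [hddef, div_le_iff₀ hs0]; nlinarith
    have hdd : d^2 * ‖y‖^2 = 4 * a := by
      have : d^2 * ‖y‖^2 = (d * ‖y‖)^2 := by ring
      rw [this, hd]; linear_combination 4 * hsa2
    have ht' : ⟪x, y⟫_ℝ ≤ sa * ‖y‖ := le_trans ht (by nlinarith [norm_nonneg x, norm_nonneg y])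
    have hsad : sa * (d * ‖y‖) = 2 * a := by rw [hd]; linear_combination 2 * hsa2
    nlinarith [mul_nonneg (sub_nonneg.mpr ht') (sub_nonneg.mpr hdle),
      sq_nonneg (‖y‖ - sa), hxy]
  · -- x large, y small
    have hr : sa < ‖x‖ := not_le.mp hx
    have hr0 : (0:ℝ) < ‖x‖ := lt_trans hsa hr
    apply conclude
    rw [expand (2 * sa / ‖x‖) 2]
    set c := 2 * sa / ‖x‖ with hcdef
    have hc : c * ‖x‖ = 2 * sa := div_mul_cancel₀ _ hr0.ne'
    have hc0 : 0 ≤ c := by positivity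
    have hcle : c ≤ 2 := by rw [hcdef, div_le_iff₀ hr0]; nlinarith
    have hcc : c^2 * ‖x‖^2 = 4 * a := by
      have : c^2 * ‖x‖^2 = (c * ‖x‖)^2 := by ring
      rw [this, hc]; linear_combination 4 * hsa2
    have ht' : ⟪x, y⟫_ℝ ≤ sa * ‖x‖ := le_trans ht (by nlinarith [norm_nonneg x, norm_nonneg y])
    have hsac : sa * (c * ‖x‖) = 2 * a := by rw [hc]; linear_combination 2 * hsa2
    nlinarith [mul_nonneg (sub_nonneg.mpr ht') (sub_nonneg.mpr hcle),
      sq_nonneg (‖x‖ - sa), hxy]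
  · -- both large
    have hr : sa < ‖x‖ := not_le.mp hx
    have hs : sa < ‖y‖ := not_le.mp hy
    have hr0 : (0:ℝ) < ‖x‖ := lt_trans hsa hr
    have hs0 : (0:ℝ) < ‖y‖ := lt_trans hsa hs
    apply conclude
    rw [expand (2 * sa / ‖x‖) (2 * sa / ‖y‖)]
    set c := 2 * sa / ‖x‖ with hcdef
    set d := 2 * sa / ‖y‖ with hddef
    have hc : c * ‖x‖ = 2 * sa := div_mul_cancel₀ _ hr0.ne'
    have hd : d * ‖y‖ = 2 * sa := div_mul_cancel₀ _ hs0.ne'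
    have hc0 : 0 ≤ c := by positivity
    have hd0 : 0 ≤ d := by positivity
    have hcle : c ≤ 2 := by rw [hcdef, div_le_iff₀ hr0]; nlinarith
    have hdle : d ≤ 2 := by rw [hddef, div_le_iff₀ hs0]; nlinarith
    have hcc : c^2 * ‖x‖^2 = 4 * a := by
      have : c^2 * ‖x‖^2 = (c * ‖x‖)^2 := by ring
      rw [this, hc]; linear_combination 4 * hsa2
    have hdd : d^2 * ‖y‖^2 = 4 * a := by
      have : d^2 * ‖y‖^2 = (d * ‖y‖)^2 := by ring
      rw [this, hd]; linear_combination 4 * hsa2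
    have hcd : (c * ‖x‖) * (d * ‖y‖) = 4 * a := by rw [hc, hd]; linear_combination 4 * hsa2
    have hcd4 : c * d ≤ 4 := by nlinarith
    nlinarith [mul_nonneg (sub_nonneg.mpr ht) (sub_nonneg.mpr hcd4),
      sq_nonneg (‖x‖ - ‖y‖), hxy]


/-- the Huber loss composed with the squared norm,
`φ(x) = ‖x‖²` if `‖x‖² ≤ a` and `φ(x) = 2√a‖x‖ − a` otherwise, is
differentiable with the stated gradient and has a `2`-Lipschitz gradient. -/
theorem huber_gradient_lipschitz {n : ℕ} (hn : 1 ≤ n) (a : ℝ) (ha : 0 < a)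
    (φ : EuclideanSpace ℝ (Fin n) → ℝ)
    (hφ : ∀ x, φ x = if ‖x‖^2 ≤ a then ‖x‖^2 else 2 * Real.sqrt a * ‖x‖ - a) :
    Differentiable ℝ φ ∧
    (∀ x, gradient φ x =
      if ‖x‖ ≤ Real.sqrt a then (2:ℝ) • x else (2 * Real.sqrt a / ‖x‖) • x) ∧
    (∀ x y, ‖gradient φ x - gradient φ y‖ ≤ 2 * ‖x - y‖) := by
  have key := huber_key a ha φ hφ
  refine ⟨fun x => (key x).differentiableAt, fun x => (key x).gradient, ?_⟩
  intro x y
  rw [(key x).gradient, (key y).gradient]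
  exact huber_lip a ha x y
end

section
/- Let a > 0, let E = EuclideanSpace ℝ (Fin n) (n ≥ 1), and define φ : E → ℝ by φ(x) = a − a·exp(−‖x‖²/a). Then φ is differentiable on E with gradient ∇φ(x) = 2·exp(−‖x‖²/a)·x, and the gradient map is Lipschitz continuous with constant 2: ‖∇φ(x) − ∇φ(y)‖ ≤ 2·‖x − y‖ for all x, y ∈ E. -/
open Real

section WelschAux

variable {n : ℕ}

/-- `(w-1)^2 ≤ exp w` for `w ≥ 0`. -/
lemma welsch_aux_cube (w : ℝ) (hw : 0 ≤ w) : (w - 1)^2 ≤ Real.exp w := by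
  have h0 : 1 + w/3 ≤ Real.exp (w/3) := by linarith [Real.add_one_le_exp (w/3)]
  have h1 : (1 + w/3)^3 ≤ Real.exp (w/3)^3 := by
    apply pow_le_pow_left₀ (by positivity) h0
  have h2 : Real.exp (w/3)^3 = Real.exp w := by
    rw [← Real.exp_nat_mul]; ring_nf
  nlinarith [sq_nonneg (w - 9), mul_nonneg hw (sq_nonneg (w - 9))]

lemma welsch_scalar (a R H t : ℝ) (ha : 0 < a) (hR : 0 ≤ R) (hH : 0 ≤ H)
    (ht : t^2 ≤ R * H) :
    4*(Real.exp (-R/a))^2*H - (16/a)*(Real.exp (-R/a))^2*t^2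
      + (16/a^2)*(Real.exp (-R/a))^2*t^2*R ≤ 4*H := by
  set e := Real.exp (-R/a) with he_def
  have he : 0 < e := Real.exp_pos _
  have he1 : e ≤ 1 := Real.exp_le_one_iff.2 (by rw [neg_div]; simp [div_nonneg hR ha.le])
  have ht0 : 0 ≤ t^2 := sq_nonneg t
  rcases le_or_gt R a with hRa | hRa
  · -- small radius case
    have key : (16/a^2)*e^2*t^2*R ≤ (16/a)*e^2*t^2 := by
      rw [div_mul_eq_mul_div, div_mul_eq_mul_div, div_mul_eq_mul_div, div_mul_eq_mul_div,
        div_mul_eq_mul_div, div_le_div_iff₀ (by positivity) (by positivity)]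
      nlinarith [mul_nonneg (mul_nonneg (sq_nonneg e) ht0) (mul_nonneg ha.le (sub_nonneg.2 hRa))]
    nlinarith [mul_nonneg hH (mul_nonneg he.le (sub_nonneg.2 he1))]
  · -- large radius case
    set w := 2*R/a with hw_def
    have hw : 0 ≤ w := by positivity
    have hRw : w * a = 2 * R := by rw [hw_def]; field_simp
    have he2 : e^2 = Real.exp (-w) := by
      rw [he_def, sq, ← Real.exp_add, hw_def]; congr 1; field_simp; ring
    have haux := welsch_aux_cube w hw
    have hmul : Real.exp w * Real.exp (-w) = 1 := by rw [← Real.exp_add]; simp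
    have hside : (w-1)^2 * Real.exp (-w) ≤ 1 := by
      nlinarith [Real.exp_pos (-w)]
    have k2 : 4*H*((w-1)^2 * Real.exp (-w)) ≤ 4*H := by nlinarith
    have hsq : a^2 * (w-1)^2 = (2*R - a)^2 := by
      have : a * (w - 1) = 2*R - a := by rw [mul_comm, sub_mul, hRw]; ring
      nlinarith [this]
    have k1 : (16/a^2)*e^2*t^2*(R-a) ≤ (16/a^2)*e^2*(R*H)*(R-a) := by
      have h0 : 0 ≤ (16/a^2)*e^2*(R-a) := mul_nonneg (by positivity) (by linarith)
      linarith [mul_le_mul_of_nonneg_left ht h0]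
    have expand : 4*e^2*H - (16/a)*e^2*t^2 + (16/a^2)*e^2*t^2*R
        = 4*e^2*H + (16/a^2)*e^2*t^2*(R-a) := by field_simp; ring
    have expand2 : 4*e^2*H + (16/a^2)*e^2*(R*H)*(R-a)
        = (4*H/a^2) * (e^2 * (2*R-a)^2) := by field_simp; ring
    have k3 : (4*H/a^2) * (e^2 * (2*R-a)^2) ≤ 4*H := by
      rw [he2, ← hsq]
      calc (4*H/a^2) * (Real.exp (-w) * (a^2*(w-1)^2))
          = 4*H*((w-1)^2 * Real.exp (-w)) := by field_simp
        _ ≤ 4*H := k2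
    rw [expand]
    calc 4*e^2*H + (16/a^2)*e^2*t^2*(R-a)
        ≤ 4*e^2*H + (16/a^2)*e^2*(R*H)*(R-a) := by linarith
      _ = (4*H/a^2) * (e^2 * (2*R-a)^2) := expand2
      _ ≤ 4*H := k3

/-- The gradient of the Welsch loss composed with the squared norm. -/
lemma welsch_hasGradientAt (a : ℝ) (ha : 0 < a) (x : EuclideanSpace ℝ (Fin n)) :
    HasGradientAt (fun x : EuclideanSpace ℝ (Fin n) => a - a * Real.exp (-‖x‖^2 / a))
      ((2 * Real.exp (-‖x‖^2 / a)) • x) x := by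
  rw [hasGradientAt_iff_hasFDerivAt]
  have h1 : HasFDerivAt (fun y : EuclideanSpace ℝ (Fin n) => ‖y‖^2)
      (2 • (innerSL ℝ x).comp (ContinuousLinearMap.id ℝ _)) x :=
    (hasFDerivAt_id x).norm_sq
  have h2 := (((h1.const_mul (-1/a)).exp.const_mul a).const_sub a)
  refine (h2.congr_fderiv ?_).congr_of_eventuallyEq (Filter.Eventually.of_forall fun y => ?_)
  · ext h
    simp [InnerProductSpace.toDual_apply_apply, real_inner_smul_left, ContinuousLinearMap.smul_apply]
    ring_nf
    rw [mul_inv_cancel₀ ha.ne', one_mul]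
  · dsimp only
    congr 3
    ring

/-- The derivative of the gradient map. -/
noncomputable def welschG (a : ℝ) (x : EuclideanSpace ℝ (Fin n)) :
    EuclideanSpace ℝ (Fin n) →L[ℝ] EuclideanSpace ℝ (Fin n) :=
  (2 * Real.exp (-‖x‖^2 / a)) • ContinuousLinearMap.id ℝ _
    + (-(4/a) * Real.exp (-‖x‖^2 / a)) • ((innerSL ℝ x).smulRight x)

lemma welschG_hasFDerivAt (a : ℝ) (x : EuclideanSpace ℝ (Fin n)) :
    HasFDerivAt (fun y : EuclideanSpace ℝ (Fin n) => (2 * Real.exp (-‖y‖^2 / a)) • y)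
      (welschG a x) x := by
  have h1 : HasFDerivAt (fun y : EuclideanSpace ℝ (Fin n) => ‖y‖^2)
      (2 • (innerSL ℝ x).comp (ContinuousLinearMap.id ℝ _)) x :=
    (hasFDerivAt_id x).norm_sq
  have hfn : (fun y : EuclideanSpace ℝ (Fin n) => 2 * Real.exp (-1/a * ‖y‖^2))
      = (fun y => 2 * Real.exp (-‖y‖^2/a)) := by
    funext y; congr 1; congr 1; ring
  have hc : HasFDerivAt (fun y : EuclideanSpace ℝ (Fin n) => 2 * Real.exp (-‖y‖^2 / a))
      ((-(4/a) * Real.exp (-‖x‖^2/a)) • (innerSL ℝ x)) x := by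
    have h2 := ((h1.const_mul (-1/a)).exp.const_mul 2)
    rw [hfn] at h2
    refine h2.congr_fderiv ?_
    · ext h
      simp only [ContinuousLinearMap.smul_apply, ContinuousLinearMap.coe_smul',
        Pi.smul_apply, ContinuousLinearMap.coe_comp', Function.comp_apply,
        ContinuousLinearMap.coe_id', id_eq, smul_eq_mul]
      rw [show (-1/a * ‖x‖^2 : ℝ) = -‖x‖^2/a by ring]
      ring
  have key := hc.smul (hasFDerivAt_id x)
  refine key.congr_fderiv ?_
  unfold welschG
  refine ContinuousLinearMap.ext fun h => ?_
  simp only [ContinuousLinearMap.add_apply, ContinuousLinearMap.smul_apply,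
    ContinuousLinearMap.coe_id', id_eq, ContinuousLinearMap.smulRight_apply, smul_eq_mul]
  module

lemma welschG_norm_le (a : ℝ) (ha : 0 < a) (x : EuclideanSpace ℝ (Fin n)) :
    ‖welschG a x‖ ≤ 2 := by
  apply ContinuousLinearMap.opNorm_le_bound _ (by norm_num)
  intro h
  set e := Real.exp (-‖x‖^2/a) with he_def
  set t : ℝ := inner ℝ x h with ht_def
  have happ : welschG a x h = (2 * e) • h + (-(4/a) * e * t) • x := by
    simp only [welschG, ContinuousLinearMap.add_apply, ContinuousLinearMap.smul_apply,
      ContinuousLinearMap.coe_id', id_eq, ContinuousLinearMap.smulRight_apply]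
    rw [smul_smul]
    rfl
  rw [happ]
  have hCS : t^2 ≤ ‖x‖^2 * ‖h‖^2 := by
    nlinarith [abs_real_inner_le_norm x h, abs_nonneg t, sq_abs t,
      norm_nonneg x, norm_nonneg h]
  have hscalar := welsch_scalar a (‖x‖^2) (‖h‖^2) t ha (by positivity) (by positivity) hCS
  have hsq : ‖(2 * e) • h + (-(4/a) * e * t) • x‖^2 ≤ (2 * ‖h‖)^2 := by
    rw [@norm_add_sq_real]
    rw [real_inner_smul_left, real_inner_smul_right]
    rw [norm_smul, norm_smul]
    have hinner : (inner ℝ h x : ℝ) = t := by rw [ht_def, real_inner_comm]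
    rw [hinner]
    simp only [Real.norm_eq_abs, mul_pow, sq_abs]
    rw [← he_def] at hscalar
    have heq : 2^2*e^2*‖h‖^2 + 2*(2*e*(-(4/a)*e*t*t)) + (-(4/a))^2*e^2*t^2*‖x‖^2
        = 4*e^2*‖h‖^2 - 16/a*e^2*t^2 + 16/a^2*e^2*t^2*‖x‖^2 := by
      field_simp
      ring
    linarith [hscalar, heq]
  have h1 := Real.sqrt_le_sqrt hsq
  rwa [Real.sqrt_sq (norm_nonneg _), Real.sqrt_sq (by positivity)] at h1

end WelschAux

/-- the Welsch loss composed with the squared norm,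
`φ(x) = a − a·exp(−‖x‖²/a)`, is differentiable with gradient
`∇φ(x) = 2·exp(−‖x‖²/a)·x`, and this gradient map is `2`-Lipschitz. -/
theorem welsch_gradient_lipschitz {n : ℕ} (hn : 1 ≤ n) (a : ℝ) (ha : 0 < a)
    (φ : EuclideanSpace ℝ (Fin n) → ℝ)
    (hφ : ∀ x, φ x = a - a * Real.exp (-‖x‖^2 / a)) :
    Differentiable ℝ φ ∧
    (∀ x, gradient φ x = (2 * Real.exp (-‖x‖^2 / a)) • x) ∧
    (∀ x y, ‖gradient φ x - gradient φ y‖ ≤ 2 * ‖x - y‖) := by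
  have hφ' : φ = fun x => a - a * Real.exp (-‖x‖^2 / a) := funext hφ
  subst hφ'
  have hgrad : ∀ x : EuclideanSpace ℝ (Fin n),
      gradient (fun x => a - a * Real.exp (-‖x‖^2 / a)) x
        = (2 * Real.exp (-‖x‖^2 / a)) • x :=
    fun x => (welsch_hasGradientAt a ha x).gradient
  have hdiff : Differentiable ℝ (fun x : EuclideanSpace ℝ (Fin n) =>
      a - a * Real.exp (-‖x‖^2 / a)) :=
    fun x => (welsch_hasGradientAt a ha x).differentiableAt
  refine ⟨hdiff, hgrad, ?_⟩
  intro x y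
  rw [hgrad x, hgrad y]
  exact convex_univ.norm_image_sub_le_of_norm_hasFDerivWithin_le
    (f := fun z : EuclideanSpace ℝ (Fin n) => (2 * Real.exp (-‖z‖^2 / a)) • z)
    (f' := welschG a)
    (fun z _ => (welschG_hasFDerivAt a z).hasFDerivWithinAt)
    (fun z _ => welschG_norm_le a ha z)
    (Set.mem_univ y) (Set.mem_univ x)
end
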